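/- Let A : ℕ^m → M_n(ℝ) satisfy A(t + T·1) = A(t) for all t ∈ ℕ^m, where T ≥ 1 is an integer. Define Ã(t) = A(t+(T-1)·1)·A(t+(T-2)·1)·…·A(t). Then the fundamental matrix Φ of the recurrence x(t+1) = A(t)x(t) satisfies Φ(t + k·T·1) = Φ(t)·(Ã(t - μ(t)·1))^k for every k ∈ ℕ. -/

import Mathlib

/-- For a `T`-diagonal-periodic recurrence, the fundamental matrix satisfies
`Φ(t + kT·1) = Φ(t)·(Ã(t-μ(t)·1))^k`, where `Ã(t) = A(t+(T-1)·1)⋯A(t)`. -/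
theorem stmt_1 {m n T : ℕ} (hm : 2 ≤ m) (hT : 1 ≤ T)
    (A : (Fin m → ℕ) → Matrix (Fin n) (Fin n) ℝ)
    (hA : ∀ t : Fin m → ℕ, A (fun i => t i + T) = A t)
    (Φ : (Fin m → ℕ) → Matrix (Fin n) (Fin n) ℝ)
    (hΦ : ∀ t : Fin m → ℕ,
      Φ t = ((List.range (⨅ i, t i)).map
        (fun k => A (fun i => t i - (k + 1)))).prod)
    (Atil : (Fin m → ℕ) → Matrix (Fin n) (Fin n) ℝ)
    (hAtil : ∀ t : Fin m → ℕ,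
      Atil t = ((List.range T).map (fun k => A (fun i => t i + (T - 1 - k)))).prod) :
    ∀ (t : Fin m → ℕ) (k : ℕ),
      Φ (fun i => t i + k * T) =
        Φ t * (Atil (fun i => t i - ⨅ i, t i)) ^ k := by
  have hmpos : 0 < m := by omega
  haveI : Nonempty (Fin m) := ⟨⟨0, hmpos⟩⟩
  have hbdd : ∀ f : Fin m → ℕ, BddBelow (Set.range f) := fun f => OrderBot.bddBelow _
  have hinf_le : ∀ (t : Fin m → ℕ) (j : Fin m), (⨅ i, t i) ≤ t j := fun t j =>
    ciInf_le (hbdd t) j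
  have hinf_mem : ∀ t : Fin m → ℕ, ∃ j, t j = ⨅ i, t i := by
    intro t
    have : (⨅ i, t i) ∈ Set.range t := by
      rw [iInf]; exact Nat.sInf_mem (Set.range_nonempty t)
    obtain ⟨j, hj⟩ := this
    exact ⟨j, hj⟩
  have hinf_add : ∀ (t : Fin m → ℕ) (c : ℕ), (⨅ i, (t i + c)) = (⨅ i, t i) + c := by
    intro t c
    obtain ⟨j, hj⟩ := hinf_mem t
    refine le_antisymm ?_ (le_ciInf fun i => Nat.add_le_add_right (hinf_le t i) c)
    calc (⨅ i, (t i + c)) ≤ t j + c := ciInf_le (hbdd _) j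
      _ = (⨅ i, t i) + c := by rw [hj]
  have key : ∀ t : Fin m → ℕ,
      Φ (fun i => t i + T) = Φ t * Atil (fun i => t i - ⨅ i, t i) := by
    intro t
    set μ := ⨅ i, t i with hμ
    have hμle : ∀ i, μ ≤ t i := hinf_le t
    rw [hΦ (fun i => t i + T), hinf_add t T, List.range_add, List.map_append,
      List.prod_append, List.map_map, hΦ t, hAtil]
    congr 1
    · apply congrArg
      apply List.map_congr_left
      intro a ha
      have haμ : a < μ := List.mem_range.mp ha
      have : (fun i => t i + T - (a + 1)) = (fun i => (t i - (a + 1)) + T) := by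
        funext i; have := hμle i; omega
      rw [this, hA]
    · apply congrArg
      apply List.map_congr_left
      intro a ha
      have haT : a < T := List.mem_range.mp ha
      simp only [Function.comp_apply]
      apply congrArg
      funext i
      have := hμle i
      omega
  intro t k
  induction k with
  | zero =>
    have h0 : (fun i => t i + 0 * T) = t := by funext i; simp
    rw [h0, pow_zero, mul_one]
  | succ k ih =>
    have h1 : (fun i => t i + (k + 1) * T) = (fun i => (t i + k * T) + T) := by
      funext i; ring
    rw [h1, key (fun i => t i + k * T), ih, hinf_add t (k * T)]
    have h2 : (fun i => t i + k * T - ((⨅ i, t i) + k * T)) = (fun i => t i - ⨅ i, t i) := by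
      funext i; omega
    rw [h2, mul_assoc, ← pow_succ]
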